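/- For every integer n ≥ 7, the sum of minimal excludants over all partitions of n+1 into distinct parts is strictly greater than the sum of minimal excludants over all partitions of n into distinct parts. -/

import Mathlib

/-- The set of partitions of `n` into distinct parts, encoded as finsets of
positive integers summing to `n`. -/
def Dpart (n : ℕ) : Finset (Finset ℕ) :=
  (Finset.Icc 1 n).powerset.filter (fun S => S.sum id = n)

/-- The minimal excludant: the least positive integer not occurring as a part. -/
noncomputable def pmex (S : Finset ℕ) : ℕ := sInf {m : ℕ | 0 < m ∧ m ∉ S}

/-- The sum of minimal excludants over all distinct-parts partitions of `n`. -/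
noncomputable def sigmadmex (n : ℕ) : ℕ := ∑ S ∈ Dpart n, pmex S

namespace AuxMex

lemma pmex_set_nonempty (S : Finset ℕ) : {m : ℕ | 0 < m ∧ m ∉ S}.Nonempty := by
  refine ⟨S.sup id + 1, Nat.succ_pos _, fun h => ?_⟩
  have : S.sup id + 1 ≤ S.sup id := Finset.le_sup (f := id) h
  omega

lemma pmex_mem (S : Finset ℕ) : 0 < pmex S ∧ pmex S ∉ S :=
  Nat.sInf_mem (pmex_set_nonempty S)

lemma pmex_pos (S : Finset ℕ) : 0 < pmex S := (pmex_mem S).1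

lemma pmex_not_mem (S : Finset ℕ) : pmex S ∉ S := (pmex_mem S).2

lemma pmex_le {S : Finset ℕ} {q : ℕ} (h0 : 0 < q) (h : q ∉ S) : pmex S ≤ q :=
  Nat.sInf_le ⟨h0, h⟩

lemma mem_of_lt_pmex {S : Finset ℕ} {q : ℕ} (h0 : 0 < q) (h : q < pmex S) : q ∈ S := by
  by_contra hq
  exact absurd (pmex_le h0 hq) (not_le.2 h)

lemma mem_Dpart {n : ℕ} {S : Finset ℕ} :
    S ∈ Dpart n ↔ S ⊆ Finset.Icc 1 n ∧ S.sum id = n := by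
  simp [Dpart, Finset.mem_filter, Finset.mem_powerset]

lemma nonempty_of_mem_Dpart {n : ℕ} {S : Finset ℕ} (hn : 1 ≤ n) (h : S ∈ Dpart n) :
    S.Nonempty := by
  rcases Finset.eq_empty_or_nonempty S with rfl | hS
  · exfalso; have := (mem_Dpart.1 h).2; simp only [Finset.sum_empty] at this; omega
  · exact hS

lemma sup_mem {n : ℕ} {S : Finset ℕ} (hn : 1 ≤ n) (h : S ∈ Dpart n) : S.sup id ∈ S := by
  obtain ⟨x, hx⟩ := nonempty_of_mem_Dpart hn h
  obtain ⟨y, hy, hsup⟩ := Finset.exists_mem_eq_sup S ⟨x, hx⟩ id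
  rw [hsup]; exact hy

lemma le_sup_of_mem {S : Finset ℕ} {x : ℕ} (h : x ∈ S) : x ≤ S.sup id :=
  Finset.le_sup (f := id) h

/-- The injection D(n) → D(n+1): bump the largest part. -/
def fmap (S : Finset ℕ) : Finset ℕ := insert (S.sup id + 1) (S.erase (S.sup id))

lemma succ_sup_not_mem (S : Finset ℕ) : S.sup id + 1 ∉ S := fun h => by
  have := le_sup_of_mem h; omega

lemma sup_fmap (S : Finset ℕ) : (fmap S).sup id = S.sup id + 1 := by
  unfold fmap
  rw [Finset.sup_insert]
  have h : (S.erase (S.sup id)).sup id ≤ S.sup id :=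
    Finset.sup_mono (Finset.erase_subset _ _)
  simp only [id]
  omega

lemma sup_not_mem_fmap (S : Finset ℕ) : S.sup id ∉ fmap S := by
  unfold fmap
  simp [Finset.mem_insert, Finset.mem_erase]

lemma fmap_mem {n : ℕ} {S : Finset ℕ} (hn : 1 ≤ n) (h : S ∈ Dpart n) :
    fmap S ∈ Dpart (n + 1) := by
  obtain ⟨hsub, hsum⟩ := mem_Dpart.1 h
  set M := S.sup id with hM
  have hMS : M ∈ S := sup_mem hn h
  have hM1 : 1 ≤ M ∧ M ≤ n := by have := hsub hMS; simpa using this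
  refine mem_Dpart.2 ⟨?_, ?_⟩
  · intro x hx
    rw [Finset.mem_Icc]
    rcases Finset.mem_insert.1 hx with rfl | hx
    · omega
    · have := hsub (Finset.mem_of_mem_erase hx)
      rw [Finset.mem_Icc] at this; omega
  · have hins : M + 1 ∉ S.erase M := fun hc =>
      succ_sup_not_mem S (Finset.mem_of_mem_erase hc)
    rw [fmap, Finset.sum_insert hins]
    have : M + (S.erase M).sum id = S.sum id :=
      Finset.add_sum_erase S id hMS
    simp only [id] at this hsum ⊢
    omega

lemma fmap_injOn {n : ℕ} (hn : 1 ≤ n) {S S' : Finset ℕ} (hS : S ∈ Dpart n)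
    (hS' : S' ∈ Dpart n) (h : fmap S = fmap S') : S = S' := by
  have hg : ∀ T ∈ Dpart n, insert ((fmap T).sup id - 1) ((fmap T).erase ((fmap T).sup id)) = T := by
    intro T hT
    rw [sup_fmap]
    simp only [Nat.add_sub_cancel]
    have h1 : (fmap T).erase (T.sup id + 1) = T.erase (T.sup id) := by
      unfold fmap
      rw [Finset.erase_insert]
      intro hc
      exact succ_sup_not_mem T (Finset.mem_of_mem_erase hc)
    rw [h1, Finset.insert_erase (sup_mem hn hT)]
  rw [← hg S hS, ← hg S' hS', h]


lemma mem_fmap_of_mem_erase {S : Finset ℕ} {x : ℕ} (h : x ∈ S.erase (S.sup id)) :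
    x ∈ fmap S := Finset.mem_insert_of_mem h

/-- Key pmex inequality. -/
lemma pmex_fmap_ge {n : ℕ} {S : Finset ℕ} (hn : 1 ≤ n) (hS : S ∈ Dpart n) :
    pmex S ≤ pmex (fmap S) + (if S = Finset.Icc 1 (S.sup id) then 1 else 0) := by
  have hMS : S.sup id ∈ S := sup_mem hn hS
  have hPS : pmex S ∉ S := pmex_not_mem S
  have hpne : pmex S ≠ S.sup id := fun h => hPS (h ▸ hMS)
  rcases lt_or_gt_of_ne hpne with hlt | hgt
  · -- pmex S < sup : pmex (fmap S) ≥ pmex S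
    have h1 : pmex S ≤ pmex (fmap S) := by
      by_contra hc
      push_neg at hc
      have hq0 : 0 < pmex (fmap S) := pmex_pos _
      have hqS : pmex (fmap S) ∈ S := mem_of_lt_pmex hq0 (by omega)
      have hqM : pmex (fmap S) ≠ S.sup id := by omega
      exact pmex_not_mem _ (mem_fmap_of_mem_erase (Finset.mem_erase.2 ⟨hqM, hqS⟩))
    split <;> omega
  · -- pmex S > sup : then S = Icc 1 sup and pmex S = sup + 1
    have hsub : S ⊆ Finset.Icc 1 n := (mem_Dpart.1 hS).1
    have hSI : S = Finset.Icc 1 (S.sup id) := by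
      apply Finset.Subset.antisymm
      · intro x hx
        have h1 := hsub hx
        rw [Finset.mem_Icc] at h1 ⊢
        exact ⟨h1.1, le_sup_of_mem hx⟩
      · intro y hy
        rw [Finset.mem_Icc] at hy
        exact mem_of_lt_pmex (by omega) (by omega)
    have hp : pmex S = S.sup id + 1 := by
      have h2 : pmex S ≤ S.sup id + 1 := pmex_le (by omega) (succ_sup_not_mem S)
      omega
    have hfm : S.sup id ≤ pmex (fmap S) := by
      by_contra hc
      push_neg at hc
      have hq0 : 0 < pmex (fmap S) := pmex_pos _
      refine pmex_not_mem (fmap S) (mem_fmap_of_mem_erase (Finset.mem_erase.2 ⟨by omega, ?_⟩))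
      conv_lhs => rw [hSI]
      rw [Finset.mem_Icc]; omega
    rw [if_pos hSI]
    omega

lemma gauss (k : ℕ) : (∑ i ∈ Finset.Icc 1 k, i) * 2 = k * (k + 1) := by
  induction k with
  | zero => simp
  | succ k ih =>
    rw [Finset.sum_Icc_succ_top (by omega)]
    ring_nf
    ring_nf at ih
    omega

/-- the set of "staircase" partitions of n has at most one element -/
lemma staircase_card {n : ℕ} :
    ((Dpart n).filter (fun S => S = Finset.Icc 1 (S.sup id))).card ≤ 1 := by
  rw [Finset.card_le_one]
  intro S hS S' hS'
  rw [Finset.mem_filter] at hS hS'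
  obtain ⟨hS, hkS⟩ := hS
  obtain ⟨hS', hkS'⟩ := hS'
  set k := S.sup id
  set k' := S'.sup id
  have h1 : (∑ i ∈ Finset.Icc 1 k, i) = n := by
    conv_rhs => rw [← (mem_Dpart.1 hS).2]
    rw [← hkS]; rfl
  have h2 : (∑ i ∈ Finset.Icc 1 k', i) = n := by
    conv_rhs => rw [← (mem_Dpart.1 hS').2]
    rw [← hkS']; rfl
  have g1 := gauss k
  have g2 := gauss k'
  have : k = k' := by nlinarith
  rw [hkS, hkS', this]


lemma sum_delta_le {n : ℕ} (hn : 1 ≤ n) :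
    sigmadmex n ≤ (∑ S ∈ Dpart n, pmex (fmap S)) +
      ((Dpart n).filter (fun S => S = Finset.Icc 1 (S.sup id))).card := by
  have h1 : sigmadmex n ≤ ∑ S ∈ Dpart n,
      (pmex (fmap S) + (if S = Finset.Icc 1 (S.sup id) then 1 else 0)) := by
    unfold sigmadmex
    exact Finset.sum_le_sum (fun S hS => pmex_fmap_ge hn hS)
  rw [Finset.sum_add_distrib] at h1
  have h2 : ∑ S ∈ Dpart n, (if S = Finset.Icc 1 (S.sup id) then 1 else 0) =
      ((Dpart n).filter (fun S => S = Finset.Icc 1 (S.sup id))).card := by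
    have := Finset.sum_boole (R := ℕ) (fun S => S = Finset.Icc 1 (S.sup id)) (Dpart n)
    simpa using this
  omega

lemma main_step {n : ℕ} (hn : 1 ≤ n) (W : Finset (Finset ℕ))
    (hWsub : W ⊆ Dpart (n + 1))
    (hWni : ∀ T ∈ W, T.sup id - 1 ∈ T)
    (hcard : ((Dpart n).filter (fun S => S = Finset.Icc 1 (S.sup id))).card < W.card) :
    sigmadmex n < sigmadmex (n + 1) := by
  set I := (Dpart n).image fmap with hI
  have hIsub : I ⊆ Dpart (n + 1) := by
    intro T hT
    obtain ⟨S, hS, rfl⟩ := Finset.mem_image.1 hT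
    exact fmap_mem hn hS
  have hdisj : Disjoint I W := by
    rw [Finset.disjoint_left]
    intro T hT hTW
    obtain ⟨S, hS, rfl⟩ := Finset.mem_image.1 hT
    have h1 := hWni _ hTW
    rw [sup_fmap] at h1
    simp only [Nat.add_sub_cancel] at h1
    exact sup_not_mem_fmap S h1
  have hsumI : ∑ T ∈ I, pmex T = ∑ S ∈ Dpart n, pmex (fmap S) := by
    rw [hI]
    exact Finset.sum_image (fun S hS S' hS' h => fmap_injOn hn hS hS' h)
  have hsumW : W.card ≤ ∑ T ∈ W, pmex T := by
    have := Finset.card_nsmul_le_sum W pmex 1 (fun x _ => pmex_pos x)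
    simpa using this
  have hunion : sigmadmex (n + 1) ≥ ∑ T ∈ I ∪ W, pmex T := by
    unfold sigmadmex
    apply Finset.sum_le_sum_of_subset
    exact Finset.union_subset hIsub hWsub
  rw [Finset.sum_union hdisj] at hunion
  have hA := sum_delta_le hn
  omega

lemma sup_pair (a b : ℕ) : ({a, b} : Finset ℕ).sup id = max a b := by
  simp [Finset.sup_insert, Finset.sup_singleton]

lemma sup_triple (a b c : ℕ) : ({a, b, c} : Finset ℕ).sup id = max a (max b c) := by
  simp [Finset.sup_insert, Finset.sup_singleton]

lemma pair_mem_Dpart {m a b : ℕ} (h1 : 1 ≤ a) (h : a < b) (hs : a + b = m) :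
    ({a, b} : Finset ℕ) ∈ Dpart m := by
  refine mem_Dpart.2 ⟨?_, ?_⟩
  · intro x hx
    simp only [Finset.mem_insert, Finset.mem_singleton] at hx
    rw [Finset.mem_Icc]
    rcases hx with rfl | rfl <;> omega
  · rw [Finset.sum_pair (by omega : a ≠ b)]
    simp only [id]; omega

lemma triple_mem_Dpart {m a b c : ℕ} (h1 : 1 ≤ a) (hab : a < b) (hbc : b < c)
    (hs : a + b + c = m) : ({a, b, c} : Finset ℕ) ∈ Dpart m := by
  refine mem_Dpart.2 ⟨?_, ?_⟩
  · intro x hx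
    simp only [Finset.mem_insert, Finset.mem_singleton] at hx
    rw [Finset.mem_Icc]
    rcases hx with rfl | rfl | rfl <;> omega
  · rw [Finset.sum_insert (by simp; omega), Finset.sum_pair (by omega : b ≠ c)]
    simp only [id]; omega


lemma no_staircase {n : ℕ} (h : n = 7 ∨ n = 9) :
    ((Dpart n).filter (fun S => S = Finset.Icc 1 (S.sup id))).card = 0 := by
  rw [Finset.card_eq_zero, Finset.eq_empty_iff_forall_notMem]
  intro S hS
  rw [Finset.mem_filter] at hS
  obtain ⟨hS, hk⟩ := hS
  have hsum : (∑ i ∈ Finset.Icc 1 (S.sup id), i) = n := by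
    conv_rhs => rw [← (mem_Dpart.1 hS).2]
    rw [← hk]; rfl
  have hg := gauss (S.sup id)
  set k := S.sup id
  rcases h with rfl | rfl <;> rcases le_or_gt k 3 with h3 | h3 <;> nlinarith

end AuxMex

open AuxMex

/-- For every integer `n ≥ 7`, `σ_d mex(n+1) > σ_d mex(n)`. -/
theorem stmt_0 (n : ℕ) (hn : 7 ≤ n) : sigmadmex n < sigmadmex (n + 1) := by
  have hn1 : 1 ≤ n := by omega
  have hstair := staircase_card (n := n)
  rcases Nat.even_or_odd (n + 1) with ⟨a, ha⟩ | ⟨a, ha⟩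
  · -- n + 1 = a + a, a ≥ 4
    have ha4 : 4 ≤ a := by omega
    by_cases h6 : 6 ≤ a
    · refine main_step hn1 {{1, a - 1, a}, {3, a - 2, a - 1}} ?_ ?_ ?_
      · intro T hT
        simp only [Finset.mem_insert, Finset.mem_singleton] at hT
        rcases hT with rfl | rfl
        · exact triple_mem_Dpart (by omega) (by omega) (by omega) (by omega)
        · exact triple_mem_Dpart (by omega) (by omega) (by omega) (by omega)
      · intro T hT
        simp only [Finset.mem_insert, Finset.mem_singleton] at hT
        rcases hT with rfl | rfl <;>
          (rw [sup_triple]; simp only [Finset.mem_insert, Finset.mem_singleton]; omega)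
      · have hne : ({1, a - 1, a} : Finset ℕ) ≠ {3, a - 2, a - 1} := by
          intro h
          have : (a : ℕ) ∈ ({3, a - 2, a - 1} : Finset ℕ) := h ▸ (by simp)
          simp only [Finset.mem_insert, Finset.mem_singleton] at this
          omega
        rw [Finset.card_insert_of_notMem (by simpa using hne), Finset.card_singleton]
        omega
    · -- a = 4 or 5, so n = 7 or 9
      have h79 : n = 7 ∨ n = 9 := by omega
      refine main_step hn1 {{1, a - 1, a}} ?_ ?_ ?_
      · intro T hT
        simp only [Finset.mem_singleton] at hT
        subst hT
        exact triple_mem_Dpart (by omega) (by omega) (by omega) (by omega)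
      · intro T hT
        simp only [Finset.mem_singleton] at hT
        subst hT
        rw [sup_triple]; simp only [Finset.mem_insert, Finset.mem_singleton]; omega
      · rw [no_staircase h79, Finset.card_singleton]
        omega
  · -- n + 1 = 2 * a + 1, a ≥ 4
    have ha4 : 4 ≤ a := by omega
    refine main_step hn1 {{a, a + 1}, {2, a - 1, a}} ?_ ?_ ?_
    · intro T hT
      simp only [Finset.mem_insert, Finset.mem_singleton] at hT
      rcases hT with rfl | rfl
      · exact pair_mem_Dpart (by omega) (by omega) (by omega)
      · exact triple_mem_Dpart (by omega) (by omega) (by omega) (by omega)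
    · intro T hT
      simp only [Finset.mem_insert, Finset.mem_singleton] at hT
      rcases hT with rfl | rfl
      · rw [sup_pair]; simp only [Finset.mem_insert, Finset.mem_singleton]; omega
      · rw [sup_triple]; simp only [Finset.mem_insert, Finset.mem_singleton]; omega
    · have hne : ({a, a + 1} : Finset ℕ) ≠ {2, a - 1, a} := by
        intro h
        have : (a + 1 : ℕ) ∈ ({2, a - 1, a} : Finset ℕ) := h ▸ (by simp)
        simp only [Finset.mem_insert, Finset.mem_singleton] at this
        omega
      rw [Finset.card_insert_of_notMem (by simpa using hne), Finset.card_singleton]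
      omega
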